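/- Let F : ℝ^n → ℝ be convex, differentiable, with F(0) ≤ 0, L-smooth with respect to ‖·‖, and satisfying F(s) ≥ B² · dist(s, S)² for some B > 0 (condition with p = 2, A = 0), where S is the polar cone of X with sup_{x∈X}‖x‖_* ≤ D. If the Blackwell conditions ⟨∇F(S_{t-1}+m_t), s_t⟩ ≤ 0 hold for all t (no step size, η_t = 1), then sup_{x∈X}⟨S_T, x⟩ ≤ (D/B) · √((L/2)∑_{t=1}^T ‖s_t − m_t‖²). -/

import Mathlib

open RealInnerProductSpace

lemma grad_ineq {n : ℕ} (F : EuclideanSpace ℝ (Fin n) → ℝ)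
    (g : EuclideanSpace ℝ (Fin n) → EuclideanSpace ℝ (Fin n))
    (hdiff : ∀ x, HasGradientAt F (g x) x)
    (hconv : ConvexOn ℝ Set.univ F) (x y : EuclideanSpace ℝ (Fin n)) :
    F x + ⟪g x, y - x⟫ ≤ F y := by
  set φ : ℝ → ℝ := fun t => F (t • (y - x) + x) with hφ
  have hφ0 : φ 0 = F x := by simp [hφ]
  have hφ1 : φ 1 = F y := by simp [hφ]
  have hconvφ : ConvexOn ℝ Set.univ φ := by
    have := hconv.comp_affineMap (AffineMap.lineMap x y : ℝ →ᵃ[ℝ] EuclideanSpace ℝ (Fin n))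
    simpa [Function.comp_def, AffineMap.lineMap_apply, hφ, vadd_eq_add, vsub_eq_sub] using this
  have hderiv : HasDerivAt φ ⟪g x, y - x⟫ 0 := by
    have h1 : HasDerivAt (fun t : ℝ => t • (y - x) + x) (y - x) 0 := by
      simpa using ((hasDerivAt_id (0:ℝ)).smul_const (y - x)).add_const x
    have h2 : HasFDerivAt F ((InnerProductSpace.toDual ℝ (EuclideanSpace ℝ (Fin n))) (g x))
        ((0:ℝ) • (y - x) + x) := by simpa using (hdiff x).hasFDerivAt
    have h3 := h2.comp_hasDerivAt (0:ℝ) h1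
    simpa [hφ, Function.comp_def] using h3
  have := hconvφ.le_slope_of_hasDerivAt (Set.mem_univ 0) (Set.mem_univ 1)
    one_pos hderiv
  rw [slope_def_field] at this
  simp only [hφ0, hφ1] at this
  have : ⟪g x, y - x⟫ ≤ F y - F x := by
    simpa [div_one] using this
  linarith

/-- Optimistic regret bound for potentials with `p = 2`, `A = 0`
(no step size needed): `sup_{x∈X}⟪S_T, x⟫ ≤ (D/B)√((L/2)∑‖s_t - m_t‖²)`. -/
theorem stmt_16 {n : ℕ} (T : ℕ)
    (F : EuclideanSpace ℝ (Fin n) → ℝ)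
    (g : EuclideanSpace ℝ (Fin n) → EuclideanSpace ℝ (Fin n))
    (hdiff : ∀ x, HasGradientAt F (g x) x)
    (hconv : ConvexOn ℝ Set.univ F) (hF0 : F 0 ≤ 0)
    (L B D : ℝ) (hB : 0 < B)
    (hsmooth : ∀ x y, F (x + y) ≤ F x + ⟪g x, y⟫ + L / 2 * ‖y‖ ^ 2)
    (X : Set (EuclideanSpace ℝ (Fin n))) (hD : ∀ x ∈ X, ‖x‖ ≤ D)
    (hdist : ∀ v : EuclideanSpace ℝ (Fin n),
      B ^ 2 * Metric.infDist v {s : EuclideanSpace ℝ (Fin n) | ∀ x ∈ X, ⟪s, x⟫ ≤ 0} ^ 2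
        ≤ F v)
    (s m : ℕ → EuclideanSpace ℝ (Fin n))
    (S : ℕ → EuclideanSpace ℝ (Fin n))
    (hS : ∀ t, S t = ∑ k ∈ Finset.Icc 1 t, s k)
    (hblackwell : ∀ t, 1 ≤ t → t ≤ T → ⟪g (S (t - 1) + m t), s t⟫ ≤ 0) :
    ∀ x ∈ X, ⟪S T, x⟫ ≤ (D / B) *
      Real.sqrt (L / 2 * ∑ t ∈ Finset.Icc 1 T, ‖s t - m t‖ ^ 2) := by
  intro x hx
  set K : Set (EuclideanSpace ℝ (Fin n)) :=
    {s : EuclideanSpace ℝ (Fin n) | ∀ x ∈ X, ⟪s, x⟫ ≤ 0} with hK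
  have hK0 : (0 : EuclideanSpace ℝ (Fin n)) ∈ K := by
    intro y hy; simp
  have hKne : K.Nonempty := ⟨0, hK0⟩
  -- step bound
  have hstep : ∀ t, 1 ≤ t → t ≤ T →
      F (S t) ≤ F (S (t - 1)) + L / 2 * ‖s t - m t‖ ^ 2 := by
    intro t ht1 htT
    have hSt : S t = S (t - 1) + m t + (s t - m t) := by
      rw [hS, hS]
      have : Finset.Icc 1 t = insert t (Finset.Icc 1 (t - 1)) := by
        ext a; simp only [Finset.mem_Icc, Finset.mem_insert]; omega
      rw [this, Finset.sum_insert (by simp [Finset.mem_Icc]; omega)]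
      abel
    have h1 := hsmooth (S (t - 1) + m t) (s t - m t)
    rw [← hSt] at h1
    have h2 : F (S (t - 1) + m t) + ⟪g (S (t - 1) + m t), S (t-1) - (S (t-1) + m t)⟫
        ≤ F (S (t - 1)) := grad_ineq F g hdiff hconv _ _
    have h3 : ⟪g (S (t - 1) + m t), (S (t-1) : EuclideanSpace ℝ (Fin n)) - (S (t-1) + m t)⟫
        = - ⟪g (S (t - 1) + m t), m t⟫ := by
      rw [← inner_neg_right]; congr 1; abel
    have h4 : ⟪g (S (t - 1) + m t), s t - m t⟫
        = ⟪g (S (t - 1) + m t), s t⟫ - ⟪g (S (t - 1) + m t), m t⟫ := by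
      rw [inner_sub_right]
    have h5 := hblackwell t ht1 htT
    rw [h3] at h2
    rw [h4] at h1
    linarith
  -- telescoping
  have hFT : F (S T) ≤ L / 2 * ∑ t ∈ Finset.Icc 1 T, ‖s t - m t‖ ^ 2 := by
    have hS0 : F (S 0) ≤ 0 := by
      rw [hS]; simpa using hF0
    have key : ∀ N, N ≤ T → F (S N) ≤ L / 2 * ∑ t ∈ Finset.Icc 1 N, ‖s t - m t‖ ^ 2 := by
      intro N
      induction N with
      | zero => intro _; simpa using hS0
      | succ k ih =>
        intro hkT
        have h1 := hstep (k + 1) (by omega) hkT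
        have h2 := ih (by omega)
        simp only [Nat.add_sub_cancel] at h1
        have h3 : Finset.Icc 1 (k + 1) = insert (k + 1) (Finset.Icc 1 k) := by
          ext a; simp only [Finset.mem_Icc, Finset.mem_insert]; omega
        rw [h3, Finset.sum_insert (by simp)]
        rw [mul_add]
        linarith
    exact key T le_rfl
  set R : ℝ := L / 2 * ∑ t ∈ Finset.Icc 1 T, ‖s t - m t‖ ^ 2 with hR
  have hd0 : 0 ≤ Metric.infDist (S T) K := Metric.infDist_nonneg
  have hBd : B ^ 2 * Metric.infDist (S T) K ^ 2 ≤ R := le_trans (hdist (S T)) hFT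
  have hR0 : 0 ≤ R := le_trans (by positivity) hBd
  have hdle : Metric.infDist (S T) K ≤ Real.sqrt R / B := by
    rw [le_div_iff₀ hB]
    have h1 : (Metric.infDist (S T) K * B) ^ 2 ≤ R := by
      rw [mul_pow]; nlinarith
    nlinarith [Real.sq_sqrt hR0, Real.sqrt_nonneg R,
      sq_nonneg (Metric.infDist (S T) K * B - Real.sqrt R)]
  have hDx : 0 ≤ D := le_trans (norm_nonneg x) (hD x hx)
  have hinner : ⟪S T, x⟫ ≤ D * Metric.infDist (S T) K := by
    rcases eq_or_lt_of_le hDx with hD0 | hD0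
    · have hx0 : x = 0 := by
        have := hD x hx
        rw [← hD0] at this
        exact norm_eq_zero.1 (le_antisymm this (norm_nonneg x))
      simp [hx0, ← hD0]
    · rw [← div_le_iff₀' hD0, Metric.infDist_eq_iInf]
      have := hKne.to_subtype
      apply le_ciInf
      rintro ⟨z, hz⟩
      rw [div_le_iff₀ hD0, dist_eq_norm]
      have h1 : ⟪S T, x⟫ = ⟪S T - z, x⟫ + ⟪z, x⟫ := by
        rw [← inner_add_left]; congr 1; abel
      have h2 : ⟪z, x⟫ ≤ 0 := hz x hx
      have h3 : ⟪S T - z, x⟫ ≤ ‖S T - z‖ * ‖x‖ := real_inner_le_norm _ _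
      have h4 : ‖S T - z‖ * ‖x‖ ≤ ‖S T - z‖ * D :=
        mul_le_mul_of_nonneg_left (hD x hx) (norm_nonneg _)
      calc ⟪S T, x⟫ ≤ ‖S T - z‖ * D := by linarith
        _ = ‖S T - z‖ * D := rfl
      
  calc ⟪S T, x⟫ ≤ D * Metric.infDist (S T) K := hinner
    _ ≤ D * (Real.sqrt R / B) := mul_le_mul_of_nonneg_left hdle hDx
    _ = (D / B) * Real.sqrt R := by ring
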